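/- For every even integer k ≥ 2 and every pair (t_b, t_d) with kπ/(k+1) ≤ t_b < t_d ≤ π, there exists a subset X ⊆ S¹ with 2k+2 points such that t_b(X) = t_b and t_d(X) = t_d. Conversely, every X ⊆ S¹ with 2k+2 points and t_b(X) < t_d(X) satisfies kπ/(k+1) ≤ t_b(X) and t_d(X) ≤ π. -/

import Mathlib

/-- The largest distance from `x` to any point of `X`. -/
noncomputable def ptTd (X : Type*) [MetricSpace X] (x : X) : ℝ :=
  sSup (Set.range fun y => dist x y)

/-- The second largest distance (counted with multiplicity over points) from `x`
to points of `X`. -/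
noncomputable def ptTb (X : Type*) [MetricSpace X] (x : X) : ℝ :=
  sSup {r : ℝ | ∃ y z : X, y ≠ z ∧ r = min (dist x y) (dist x z)}

/-- `t_b(X) = max_{x ∈ X} t_b(x)`. -/
noncomputable def tbX (X : Type*) [MetricSpace X] : ℝ :=
  sSup (Set.range (ptTb X))

/-- `t_d(X) = min_{x ∈ X} t_d(x)`. -/
noncomputable def tdX (X : Type*) [MetricSpace X] : ℝ :=
  sInf (Set.range (ptTd X))

open Set

section generic
variable {X : Type*} [MetricSpace X] [Finite X]

lemma ptTb_set_finite (x : X) :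
    {r : ℝ | ∃ y z : X, y ≠ z ∧ r = min (dist x y) (dist x z)}.Finite := by
  have : {r : ℝ | ∃ y z : X, y ≠ z ∧ r = min (dist x y) (dist x z)} ⊆
      Set.range (fun p : X × X => min (dist x p.1) (dist x p.2)) := by
    rintro r ⟨y, z, hyz, rfl⟩; exact ⟨(y, z), rfl⟩
  exact (Set.finite_range _).subset this

lemma ptTd_le (x : X) {r : ℝ} (h : ∀ y, dist x y ≤ r) : ptTd X x ≤ r := by
  have : Nonempty X := ⟨x⟩
  exact csSup_le (range_nonempty _) (by rintro _ ⟨y, rfl⟩; exact h y)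

lemma le_ptTd (x y : X) : dist x y ≤ ptTd X x :=
  le_csSup (Set.finite_range _).bddAbove ⟨y, rfl⟩

lemma exists_ptTd (x : X) : ∃ y, dist x y = ptTd X x := by
  have : Nonempty X := ⟨x⟩
  exact (range_nonempty (fun y : X => dist x y)).csSup_mem (Set.finite_range _)

lemma ptTb_le (x : X) {r : ℝ}
    (h : ∀ y z : X, y ≠ z → min (dist x y) (dist x z) ≤ r)
    (hne : ∃ y z : X, y ≠ z) : ptTb X x ≤ r := by
  refine csSup_le ?_ (by rintro _ ⟨y, z, hyz, rfl⟩; exact h y z hyz)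
  obtain ⟨y, z, hyz⟩ := hne
  exact ⟨_, y, z, hyz, rfl⟩

lemma le_ptTb (x : X) {y z : X} (hyz : y ≠ z) :
    min (dist x y) (dist x z) ≤ ptTb X x :=
  le_csSup (ptTb_set_finite x).bddAbove ⟨y, z, hyz, rfl⟩

lemma ptTb_le_tbX (x : X) : ptTb X x ≤ tbX X :=
  le_csSup (Set.finite_range _).bddAbove ⟨x, rfl⟩

lemma tbX_le [Nonempty X] {r : ℝ} (h : ∀ x, ptTb X x ≤ r) : tbX X ≤ r :=
  csSup_le (range_nonempty _) (by rintro _ ⟨x, rfl⟩; exact h x)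

lemma tdX_le_ptTd (x : X) : tdX X ≤ ptTd X x :=
  csInf_le (Set.finite_range _).bddBelow ⟨x, rfl⟩

lemma le_tdX [Nonempty X] {r : ℝ} (h : ∀ x, r ≤ ptTd X x) : r ≤ tdX X :=
  le_csInf (range_nonempty _) (by rintro _ ⟨x, rfl⟩; exact h x)

end generic

section circle

open Real

local notation "S¹" => AddCircle (2 * π)

lemma htp : (0 : ℝ) < 2 * π := Real.two_pi_pos

lemma habs_tp : |2 * π| = 2 * π := abs_of_pos htp

lemma coe_sub_two_pi_int (x : ℝ) (q : ℤ) : (((x - 2 * π * q) : ℝ) : S¹) = (x : S¹) := by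
  have h : ((2 * π * q : ℝ) : S¹) = 0 := by
    rw [AddCircle.coe_eq_zero_iff]
    exact ⟨q, by rw [zsmul_eq_mul]; push_cast; ring⟩
  have := AddCircle.coe_sub (2 * π) x (2 * π * q)
  rw [this, h, sub_zero]

lemma circle_norm_le (x : ℝ) (q : ℤ) : ‖(x : S¹)‖ ≤ |x - 2 * π * q| := by
  rw [AddCircle.norm_eq]
  have hy := round_le ((2*π)⁻¹ * x) q
  have e1 : x - round ((2*π)⁻¹ * x) * (2*π) =
      (2*π) * ((2*π)⁻¹ * x - round ((2*π)⁻¹ * x)) := by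
    have := htp.ne'
    field_simp
  have e2 : x - 2*π*q = (2*π) * ((2*π)⁻¹ * x - q) := by
    have := htp.ne'
    field_simp
  rw [e1, e2]
  rw [abs_mul (2*π), abs_mul (2*π), habs_tp]
  exact mul_le_mul_of_nonneg_left hy htp.le

lemma circle_norm_eq (x : ℝ) (q : ℤ) (h : |x - 2 * π * q| ≤ π) :
    ‖(x : S¹)‖ = |x - 2 * π * q| := by
  rw [← coe_sub_two_pi_int x q]
  rw [AddCircle.norm_coe_eq_abs_iff (2*π) (ne_of_gt htp), habs_tp]
  linarith
  
lemma circle_dist_coe (a b : ℝ) : dist (a : S¹) (b : S¹) = ‖((b - a : ℝ) : S¹)‖ := by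
  rw [dist_eq_norm, ← AddCircle.coe_sub, ← norm_neg, ← AddCircle.coe_neg, neg_sub]

lemma circle_dist_eq (a b : ℝ) (q : ℤ) (h : |b - a - 2 * π * q| ≤ π) :
    dist (a : S¹) (b : S¹) = |b - a - 2 * π * q| := by
  rw [circle_dist_coe, circle_norm_eq _ q h]

lemma circle_dist_le (a b : ℝ) (q : ℤ) :
    dist (a : S¹) (b : S¹) ≤ |b - a - 2 * π * q| := by
  rw [circle_dist_coe]; exact circle_norm_le _ q

lemma circle_dist_le_pi (x y : S¹) : dist x y ≤ π := by
  rw [dist_eq_norm]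
  have := AddCircle.norm_le_half_period (2*π) (ne_of_gt htp) (x := x - y)
  rw [habs_tp] at this
  linarith

lemma circle_dist_min (a b : ℝ) (h0 : 0 ≤ b - a) (h2 : b - a ≤ 2 * π) :
    dist (a : S¹) (b : S¹) = min (b - a) (2 * π - (b - a)) := by
  have hpi := pi_pos
  rcases le_or_gt (b - a) π with h | h
  · rw [circle_dist_eq a b 0 (by rw [abs_of_nonneg]; simpa using h; simpa using h0)]
    rw [abs_of_nonneg (by simpa using h0)]
    simp only [Int.cast_zero, mul_zero, sub_zero]
    rw [min_eq_left (by linarith)]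
  · rw [circle_dist_eq a b 1 (by rw [abs_of_nonpos (by push_cast; linarith)]; push_cast; linarith)]
    rw [abs_of_nonpos (by push_cast; linarith)]
    push_cast
    rw [min_eq_right (by linarith)]
    ring

end circle

section part1
open Real
local notation "S¹" => AddCircle (2 * π)

set_option maxHeartbeats 1000000 in
lemma part1 (k : ℕ) (hk : 2 ≤ k) (hke : Even k) (b d : ℝ)
    (hb : (k : ℝ) * π / (k + 1) ≤ b) (hbd : b < d) (hd : d ≤ π) :
    ∃ s : Finset S¹, s.card = 2 * k + 2 ∧ tbX ↥s = b ∧ tdX ↥s = d := by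
  obtain ⟨κ, hκ⟩ := hke
  have hpi := pi_pos
  obtain ⟨β, hβdef⟩ : ∃ β : ℝ, β = π / (k + 1) := ⟨_, rfl⟩
  have hβ : 0 < β := by rw [hβdef]; positivity
  have hβπ : ((k : ℝ) + 1) * β = π := by
    rw [hβdef]; field_simp
  have hkb : (k : ℝ) * β ≤ b := by
    rw [hβdef, ← mul_div_assoc]; exact hb
  obtain ⟨ε, hεdef⟩ : ∃ ε : ℝ, ε = b - k * β := ⟨_, rfl⟩
  obtain ⟨δ, hδdef⟩ : ∃ δ : ℝ, δ = π - d := ⟨_, rfl⟩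
  have hε : 0 ≤ ε := by rw [hεdef]; linarith
  have hδ : 0 ≤ δ := by rw [hδdef]; linarith
  have hbeq : b = k * β + ε := by rw [hεdef]; ring
  have hdeq : d = ((k:ℝ) + 1) * β - δ := by rw [hδdef, hβπ]; ring
  have hεδ : ε + δ < β := by nlinarith [hbeq, hdeq]
  have hk2R : (2:ℝ) ≤ (k:ℝ) := by exact_mod_cast hk
  have hkβ2 : 2*β ≤ k*β := by nlinarith
  have hbpos : 0 < b := by linarith
  have hbπ : b ≤ π := by linarith
  have hdpos : 0 < d := by linarith
  have h2κ : (2:ℝ) * κ = k := by push_cast [hκ]; ring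
  have h2κβ : 2*β*(κ:ℝ) = β*k := by linear_combination β * h2κ
  have hκ0R : (0:ℝ) ≤ (κ:ℝ) := Nat.cast_nonneg κ
  -- the points
  obtain ⟨A, hAdef⟩ : ∃ A : ℕ → ℝ, A = fun j : ℕ => 2 * β * (j:ℝ) + (if j = 0 then 0 else ε) := ⟨_, rfl⟩
  obtain ⟨Bp, hBdef⟩ : ∃ Bp : ℕ → ℝ, Bp = fun j => A j + (π - δ) := ⟨_, rfl⟩
  -- A-A distances, sorted case
  have hAAlt : ∀ i j : ℕ, j ≤ k → i < j →
      0 < dist ((A i : ℝ) : S¹) ((A j : ℝ) : S¹) ∧ dist ((A i : ℝ) : S¹) ((A j : ℝ) : S¹) ≤ b := by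
    intro i j hj hij
    have hdiff : A j - A i = 2 * β * ((j:ℝ) - i) + (if i = 0 then ε else 0) := by
      rw [hAdef]
      have hj0 : ¬ (j = 0) := by omega
      by_cases hi0 : i = 0 <;> simp [hi0, hj0] <;> ring
    set e : ℝ := if i = 0 then ε else 0 with hedef
    have he : 0 ≤ e ∧ e ≤ ε := by
      constructor <;> (by_cases hi0 : i = 0 <;> simp [hedef, hi0, hε])
    have hji1 : (1:ℝ) ≤ (j:ℝ) - i := by
      have : (i:ℝ) + 1 ≤ j := by exact_mod_cast hij
      linarith
    have hcast : (j:ℝ) - i = ((j - i : ℕ) : ℝ) := by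
      push_cast [Nat.cast_sub hij.le]; ring
    rcases le_or_gt (2 * (j - i)) k with hcase | hcase
    · -- near case, q = 0
      have hjiκ : (j:ℝ) - i ≤ κ := by
        have h1 : j - i ≤ κ := by omega
        rw [hcast]; exact_mod_cast h1
      have hm1 : 2 * β * ((j:ℝ) - i) ≤ 2 * β * κ := by nlinarith
      have hm2 : 2 * β * 1 ≤ 2 * β * ((j:ℝ) - i) := by nlinarith
      have habs : |A j - A i - 2 * π * (0:ℤ)| = 2 * β * ((j:ℝ) - i) + e := by
        push_cast
        rw [mul_zero, sub_zero, hdiff, abs_of_nonneg (by nlinarith)]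
      have hval : |A j - A i - 2 * π * (0:ℤ)| ≤ π := by
        rw [habs, ← hβπ]; linarith [hm1, h2κβ, he.2, hεδ, hδ, hβ]
      rw [circle_dist_eq (A i) (A j) 0 hval, habs]
      constructor
      · linarith [hm2, he.1, hβ]
      · linarith [hm1, h2κβ, he.2, hbeq]
    · -- far case, q = 1
      have hjiκ : (κ:ℝ) + 1 ≤ (j:ℝ) - i := by
        have h1 : κ + 1 ≤ j - i := by omega
        rw [hcast]; exact_mod_cast h1
      have hjik : (j:ℝ) - i ≤ k := by
        have h1 : j - i ≤ k := by omega
        rw [hcast]; exact_mod_cast h1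
      have hm1 : 2 * β * ((j:ℝ) - i) ≤ 2 * β * k := by nlinarith
      have hm2 : 2 * β * ((κ:ℝ)+1) ≤ 2 * β * ((j:ℝ) - i) := by nlinarith
      have habs : |A j - A i - 2 * π * (1:ℤ)| = 2 * β * ((k:ℝ) + 1 - ((j:ℝ) - i)) - e := by
        push_cast
        rw [mul_one, hdiff, ← hβπ,
          abs_of_nonpos (by linarith [hm1, he.2, hεδ, hδ, hβ])]
        ring
      have hval : |A j - A i - 2 * π * (1:ℤ)| ≤ π := by
        rw [habs, ← hβπ]; linarith [hm2, h2κβ, he.1, hβ]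
      rw [circle_dist_eq (A i) (A j) 1 hval, habs]
      constructor
      · linarith [hm1, he.2, hεδ, hδ, hβ]
      · linarith [hm2, h2κβ, he.1, hbeq, hε]
  have hAA : ∀ i j : ℕ, i ≤ k → j ≤ k → i ≠ j →
      0 < dist ((A i : ℝ) : S¹) ((A j : ℝ) : S¹) ∧ dist ((A i : ℝ) : S¹) ((A j : ℝ) : S¹) ≤ b := by
    intro i j hi hj hij
    rcases lt_or_gt_of_ne hij with h | h
    · exact hAAlt i j hj h
    · rw [dist_comm]; exact hAAlt j i hi h
  -- the exact b distance
  have hA0κ : dist ((A 0 : ℝ) : S¹) ((A κ : ℝ) : S¹) = b := by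
    have hκ0 : ¬ (κ = 0) := by omega
    have hdiff : A κ - A 0 = 2 * β * κ + ε := by
      rw [hAdef]; simp [hκ0]
    have hbval : 2 * β * κ + ε = b := by
      rw [hbeq]; linear_combination β * h2κ
    have habs : |A κ - A 0 - 2 * π * (0:ℤ)| = b := by
      push_cast
      rw [mul_zero, sub_zero, hdiff, abs_of_nonneg (by nlinarith), hbval]
    have hval : |A κ - A 0 - 2 * π * (0:ℤ)| ≤ π := by rw [habs]; exact hbπ
    rw [circle_dist_eq _ _ 0 hval, habs]
  -- B translates
  have hBval : ∀ j : ℕ, Bp j = A j + (π - δ) := by intro j; rw [hBdef]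
  have hBcoe : ∀ j : ℕ, ((Bp j : ℝ) : S¹) = ((A j : ℝ) : S¹) + ((π - δ : ℝ) : S¹) := by
    intro j
    rw [hBval]
    exact AddCircle.coe_add (p := 2*π) _ _
  have hBB : ∀ i j : ℕ, dist ((Bp i : ℝ) : S¹) ((Bp j : ℝ) : S¹)
      = dist ((A i : ℝ) : S¹) ((A j : ℝ) : S¹) := by
    intro i j; rw [hBcoe, hBcoe, dist_add_right]
  -- A-B partner distances
  have hABeq : ∀ i : ℕ, dist ((A i : ℝ) : S¹) ((Bp i : ℝ) : S¹) = d := by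
    intro i
    have hd1 : Bp i - A i - 2 * π * ((0:ℤ):ℝ) = π - δ := by
      rw [hBval]; push_cast; ring
    have hval : |Bp i - A i - 2 * π * ((0:ℤ):ℝ)| ≤ π := by
      rw [hd1, abs_of_nonneg (by linarith)]; linarith
    rw [circle_dist_eq _ _ 0 hval, hd1, abs_of_nonneg (by linarith), hδdef]
    ring
  -- A-B non-partner distances
  have hABne : ∀ i j : ℕ, i ≤ k → j ≤ k → i ≠ j →
      0 < dist ((A i : ℝ) : S¹) ((Bp j : ℝ) : S¹) ∧
        dist ((A i : ℝ) : S¹) ((Bp j : ℝ) : S¹) ≤ b := by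
    intro i j hi hj hij
    have key : ∀ (q : ℤ) (N : ℤ) (e : ℝ),
        Bp j - A i - 2*π*q = (N:ℝ) * β + e → |e| ≤ ε + δ → N ≠ 0 →
        -((k:ℤ)-1) ≤ N → N ≤ (k:ℤ)-1 →
        0 < dist ((A i : ℝ) : S¹) ((Bp j : ℝ) : S¹) ∧
          dist ((A i : ℝ) : S¹) ((Bp j : ℝ) : S¹) ≤ b := by
      intro q N e heq he hN0 hNlb hNub
      have hN1 : (1:ℝ) ≤ |(N:ℝ)| := by
        rw [← Int.cast_abs]
        exact_mod_cast Int.one_le_abs hN0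
      have hNk' : |(N:ℝ)| ≤ (k:ℝ) - 1 := by
        rw [← Int.cast_abs]
        have h1 : |N| ≤ (k:ℤ) - 1 := abs_le.mpr ⟨hNlb, hNub⟩
        have h2 : ((|N| : ℤ) : ℝ) ≤ (((k:ℤ) - 1 : ℤ) : ℝ) := by exact_mod_cast h1
        push_cast at h2 ⊢
        linarith
      have habsNβ : |(N:ℝ) * β| = |(N:ℝ)| * β := by
        rw [abs_mul, abs_of_pos hβ]
      have hub : |Bp j - A i - 2*π*q| ≤ ((k:ℝ) - 1) * β + (ε + δ) := by
        rw [heq]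
        refine (abs_add_le _ _).trans ?_
        rw [habsNβ]
        have := hβ.le
        nlinarith
      have hlb : β - (ε + δ) ≤ |Bp j - A i - 2*π*q| := by
        rw [heq]
        have h1 : |(N:ℝ)*β| ≤ |(N:ℝ)*β + e| + |e| := by
          have h2 := abs_add_le ((N:ℝ)*β + e) (-e)
          simpa using h2
        rw [habsNβ] at h1
        nlinarith
      have hval : |Bp j - A i - 2*π*q| ≤ π := by
        refine hub.trans ?_
        rw [← hβπ]
        nlinarith
      rw [circle_dist_eq _ _ q hval]
      constructor
      · linarith
      · rw [hbeq]; nlinarith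
    obtain ⟨e, hedef⟩ : ∃ e : ℝ, e = (if j = 0 then 0 else ε) - (if i = 0 then 0 else ε) :=
      ⟨_, rfl⟩
    have he' : |e| ≤ ε := by
      rw [hedef]
      have hcc : ∀ c : ℕ, (0:ℝ) ≤ (if c = 0 then 0 else ε) ∧ (if c = 0 then 0 else ε) ≤ ε := by
        intro c; by_cases h : c = 0 <;> simp [h, hε]
      rcases hcc i with ⟨hi1, hi2⟩
      rcases hcc j with ⟨hj1, hj2⟩
      rw [abs_le]; constructor <;> nlinarith
    have heδ : |e - δ| ≤ ε + δ := by
      rw [sub_eq_add_neg]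
      refine (abs_add_le _ _).trans ?_
      rw [abs_neg, abs_of_nonneg hδ]
      linarith
    have hediff : ∀ q : ℤ, Bp j - A i - 2*π*q
        = ((2*((j:ℤ) - i) + (k+1) - 2*(k+1)*q : ℤ) : ℝ) * β + (e - δ) := by
      intro q
      rw [hBval, hAdef, hedef, ← hβπ]
      push_cast
      ring
    rcases lt_or_gt_of_ne hij with h | h
    · -- i < j : q = 1
      have hNeq : (2*((j:ℤ) - i) + ((k:ℤ)+1) - 2*((k:ℤ)+1)*1) = 2*((j:ℤ) - i) - ((k:ℤ)+1) := by
        ring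
      refine key 1 (2*((j:ℤ) - i) - ((k:ℤ)+1)) (e - δ) ?_ heδ (by omega) (by omega) (by omega)
      rw [hediff 1, hNeq]
    · -- j < i : q = 0
      have hNeq : (2*((j:ℤ) - i) + ((k:ℤ)+1) - 2*((k:ℤ)+1)*0) = 2*((j:ℤ) - i) + ((k:ℤ)+1) := by
        ring
      refine key 0 (2*((j:ℤ) - i) + ((k:ℤ)+1)) (e - δ) ?_ heδ (by omega) (by omega) (by omega)
      rw [hediff 0, hNeq]
  -- now assemble the configuration
  obtain ⟨F, hFdef⟩ : ∃ F : ℕ → S¹,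
      F = fun i => if i ≤ k then ((A i : ℝ) : S¹) else ((Bp (i - (k+1)) : ℝ) : S¹) := ⟨_, rfl⟩
  obtain ⟨pr, hprdef⟩ : ∃ pr : ℕ → ℕ,
      pr = fun i => if i ≤ k then i + (k+1) else i - (k+1) := ⟨_, rfl⟩
  have hFA : ∀ i, i ≤ k → F i = ((A i : ℝ) : S¹) := by
    intro i hik; rw [hFdef]; simp [hik]
  have hFB : ∀ i, ¬ (i ≤ k) → F i = ((Bp (i - (k+1)) : ℝ) : S¹) := by
    intro i hik; rw [hFdef]; simp [hik]
  have hprA : ∀ i, i ≤ k → pr i = i + (k+1) := by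
    intro i hik; rw [hprdef]; simp [hik]
  have hprB : ∀ i, ¬ (i ≤ k) → pr i = i - (k+1) := by
    intro i hik; rw [hprdef]; simp [hik]
  have hFd : ∀ i, i < 2*k+2 → dist (F i) (F (pr i)) = d := by
    intro i hi
    by_cases hik : i ≤ k
    · have h2 : F (pr i) = ((Bp i : ℝ) : S¹) := by
        rw [hprA i hik, hFB _ (by omega)]
        congr 2
        omega
      rw [hFA i hik, h2]; exact hABeq i
    · have h2 : F (pr i) = ((A (i - (k+1)) : ℝ) : S¹) := by
        rw [hprB i hik, hFA _ (by omega)]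
      rw [hFB i hik, h2, dist_comm]; exact hABeq _
  have hFother : ∀ i j, i < 2*k+2 → j < 2*k+2 → j ≠ i → j ≠ pr i →
      0 < dist (F i) (F j) ∧ dist (F i) (F j) ≤ b := by
    intro i j hi hj hji hjpr
    by_cases hik : i ≤ k <;> by_cases hjk : j ≤ k
    · rw [hFA i hik, hFA j hjk]; exact hAA i j hik hjk (by omega)
    · have hne : i ≠ j - (k+1) := by
        rw [hprA i hik] at hjpr
        omega
      rw [hFA i hik, hFB j hjk]
      exact hABne i (j - (k+1)) hik (by omega) hne
    · have hne : j ≠ i - (k+1) := by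
        rw [hprB i hik] at hjpr
        omega
      rw [hFB i hik, hFA j hjk, dist_comm]
      exact hABne j (i - (k+1)) hjk (by omega) hne
    · rw [hFB i hik, hFB j hjk, hBB]
      exact hAA _ _ (by omega) (by omega) (by omega)
  have hprlt : ∀ i, i < 2*k+2 → pr i < 2*k+2 := by
    intro i hi
    by_cases hik : i ≤ k
    · rw [hprA i hik]; omega
    · rw [hprB i hik]; omega
  have hFpos : ∀ i j, i < 2*k+2 → j < 2*k+2 → j ≠ i → 0 < dist (F i) (F j) := by
    intro i j hi hj hji
    by_cases hjpr : j = pr i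
    · rw [hjpr, hFd i hi]; exact hdpos
    · exact (hFother i j hi hj hji hjpr).1
  set s : Finset S¹ := (Finset.range (2*k+2)).image F with hsdef
  have hinj : Set.InjOn F (Finset.range (2*k+2)) := by
    intro i hi j hj hij
    by_contra hne
    have h1 := hFpos i j (Finset.mem_range.mp hi) (Finset.mem_range.mp hj) (Ne.symm hne)
    rw [hij] at h1
    simp at h1
  have hcard : s.card = 2*k+2 := by
    rw [hsdef, Finset.card_image_of_injOn hinj, Finset.card_range]
  have hmem : ∀ i, i < 2*k+2 → F i ∈ s := by
    intro i hi
    exact Finset.mem_image_of_mem F (Finset.mem_range.mpr hi)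
  have hidx : ∀ x : ↥s, ∃ i, i < 2*k+2 ∧ F i = x.val := by
    rintro ⟨x, hx⟩
    rw [hsdef] at hx
    obtain ⟨i, hi, hFi⟩ := Finset.mem_image.mp hx
    exact ⟨i, Finset.mem_range.mp hi, hFi⟩
  have hx0 : F 0 ∈ s := hmem 0 (by omega)
  have hnonempty : Nonempty ↥s := ⟨⟨F 0, hx0⟩⟩
  -- every point's ptTd is d
  have hptTd : ∀ x : ↥s, ptTd ↥s x = d := by
    intro x
    obtain ⟨i, hi, hFi⟩ := hidx x
    apply le_antisymm
    · apply ptTd_le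
      intro y
      obtain ⟨j, hj, hFj⟩ := hidx y
      rw [Subtype.dist_eq, ← hFi, ← hFj]
      by_cases hji : j = i
      · rw [hji]; simp [hdpos.le]
      · by_cases hjpr : j = pr i
        · rw [hjpr, hFd i hi]
        · exact le_of_lt (lt_of_le_of_lt (hFother i j hi hj hji hjpr).2 hbd)
    · have hprm : pr i < 2*k+2 := hprlt i hi
      have := le_ptTd x ⟨F (pr i), hmem _ hprm⟩
      rwa [Subtype.dist_eq, ← hFi, hFd i hi] at this
  -- every point's ptTb is at most b
  have hptTb_le : ∀ x : ↥s, ptTb ↥s x ≤ b := by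
    intro x
    obtain ⟨i, hi, hFi⟩ := hidx x
    have hfar : ∀ w : ↥s, b < dist x w → w.val = F (pr i) := by
      intro w hw
      obtain ⟨j, hj, hFj⟩ := hidx w
      rw [Subtype.dist_eq, ← hFi, ← hFj] at hw
      by_cases hji : j = i
      · exfalso; rw [hji] at hw; simp at hw; linarith
      · by_cases hjpr : j = pr i
        · rw [← hFj, hjpr]
        · exfalso; linarith [(hFother i j hi hj hji hjpr).2]
    apply ptTb_le
    · intro y z hyz
      by_contra hcon
      push_neg at hcon
      rw [lt_min_iff] at hcon
      have hy := hfar y hcon.1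
      have hz := hfar z hcon.2
      exact hyz (Subtype.ext (hy.trans hz.symm))
    · refine ⟨⟨F 0, hx0⟩, ⟨F 1, hmem 1 (by omega)⟩, ?_⟩
      intro hcon
      have h1 := hFpos 0 1 (by omega) (by omega) (by omega)
      rw [show F 1 = F 0 from (congrArg Subtype.val hcon).symm] at h1
      simp at h1
  -- ptTb of F 0 is at least b
  have hptTb_ge : b ≤ ptTb ↥s ⟨F 0, hx0⟩ := by
    have hκk : κ ≤ k := by omega
    have hprm : (k+1) < 2*k+2 := by omega
    have hκm : κ < 2*k+2 := by omega
    have hne : (⟨F (k+1), hmem _ hprm⟩ : ↥s) ≠ ⟨F κ, hmem _ hκm⟩ := by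
      intro hcon
      have h1 := hFpos (k+1) κ hprm hκm (by omega)
      rw [show F κ = F (k+1) from (congrArg Subtype.val hcon).symm] at h1
      simp at h1
    have h1 := le_ptTb (⟨F 0, hx0⟩ : ↥s) hne
    have hpr0 : pr 0 = k + 1 := by rw [hprA 0 (by omega)]; omega
    have hd0 : dist (F 0) (F (k+1)) = d := by
      have h2 := hFd 0 (by omega)
      rwa [hpr0] at h2
    have hb0 : dist (F 0) (F κ) = b := by
      rw [hFA 0 (by omega), hFA κ hκk, hA0κ]
    rw [Subtype.dist_eq, Subtype.dist_eq] at h1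
    simp only at h1
    rw [hd0, hb0, min_eq_right hbd.le] at h1
    exact h1
  refine ⟨s, hcard, ?_, ?_⟩
  · apply le_antisymm
    · exact tbX_le hptTb_le
    · exact le_trans hptTb_ge (ptTb_le_tbX _)
  · apply le_antisymm
    · exact le_of_le_of_eq (tdX_le_ptTd (⟨F 0, hx0⟩ : ↥s)) (hptTd _)
    · exact le_tdX (fun x => (hptTd x).ge)
end part1

section lift
open Real Set

local notation "S¹" => AddCircle (2 * π)

lemma exists_lift (n : ℕ) (hn : 0 < n) (s : Finset S¹) (hcard : s.card = n) :
    ∃ Θ : ℤ → ℝ, StrictMono Θ ∧ (∀ i : ℤ, Θ (i + n) = Θ i + 2*π) ∧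
      (∀ i : ℤ, ((Θ i : ℝ) : S¹) ∈ s) ∧
      (∀ i j : ℤ, (((Θ i : ℝ) : S¹) = ((Θ j : ℝ) : S¹)) ↔ i % (n:ℤ) = j % (n:ℤ)) ∧
      (∀ x, x ∈ s → ∃ i : ℤ, 0 ≤ i ∧ i < (n:ℤ) ∧ ((Θ i : ℝ) : S¹) = x) := by
  haveI : Fact ((0:ℝ) < 2*π) := ⟨htp⟩
  have hrep_proj : ∀ z : S¹, (((AddCircle.equivIco (2*π) 0 z : ℝ)) : S¹) = z := fun z =>
    (AddCircle.equivIco (2*π) 0).symm_apply_apply z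
  set rep : S¹ → ℝ := fun z => ((AddCircle.equivIco (2*π) 0 z : ℝ)) with hrepdef
  have hrep_mem : ∀ z : S¹, 0 ≤ rep z ∧ rep z < 2*π := by
    intro z
    have h1 := (AddCircle.equivIco (2*π) 0 z).2
    exact ⟨h1.1, by have := h1.2; linarith⟩
  have hrepinj : Function.Injective rep := by
    intro a b h
    rw [← hrep_proj a, ← hrep_proj b]
    exact congrArg _ h
  set t : Finset ℝ := s.image rep with htdef
  have ht : t.card = n := by
    rw [htdef, Finset.card_image_of_injective _ hrepinj, hcard]
  set E := t.orderEmbOfFin ht with hEdef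
  have htmem : ∀ r, r ∈ t → (0 ≤ r ∧ r < 2*π) ∧ ((r : ℝ) : S¹) ∈ s := by
    intro r hr
    obtain ⟨z, hz, rfl⟩ := Finset.mem_image.mp hr
    exact ⟨hrep_mem z, by rw [hrep_proj]; exact hz⟩
  have hE0 : ∀ fi : Fin n, 0 ≤ E fi := fun fi => ((htmem _ (t.orderEmbOfFin_mem ht fi)).1).1
  have hE2π : ∀ fi : Fin n, E fi < 2*π := fun fi => ((htmem _ (t.orderEmbOfFin_mem ht fi)).1).2
  have hEproj : ∀ fi : Fin n, ((E fi : ℝ) : S¹) ∈ s :=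
    fun fi => (htmem _ (t.orderEmbOfFin_mem ht fi)).2
  have hn' : (0:ℤ) < (n:ℤ) := by exact_mod_cast hn
  have hidxpf : ∀ i : ℤ, (i % (n:ℤ)).toNat < n := by
    intro i
    have h1 := Int.emod_nonneg i (ne_of_gt hn')
    have h2 := Int.emod_lt_of_pos i hn'
    omega
  set idx : ℤ → Fin n := fun i => ⟨(i % (n:ℤ)).toNat, hidxpf i⟩ with hidxdef
  set Θ : ℤ → ℝ := fun i => E (idx i) + 2*π * ((i / (n:ℤ) : ℤ) : ℝ) with hΘdef
  have hdm : ∀ i : ℤ, (n:ℤ) * (i / n) + i % n = i := fun i => Int.mul_ediv_add_emod i n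
  -- the coe of Θ i
  have hΘcoe : ∀ i : ℤ, ((Θ i : ℝ) : S¹) = ((E (idx i) : ℝ) : S¹) := by
    intro i
    have h1 : Θ i - 2*π*((i / (n:ℤ) : ℤ) : ℝ) = E (idx i) := by rw [hΘdef]; ring
    rw [← coe_sub_two_pi_int (Θ i) (i / (n:ℤ)), h1]
  -- periodicity
  have hmod : ∀ i : ℤ, (i + n) % (n:ℤ) = i % n := by
    intro i
    have h := Int.add_mul_emod_self_left (a := i) (b := (n:ℤ)) (c := 1)
    rwa [mul_one] at h
  have hdiv : ∀ i : ℤ, (i + n) / (n:ℤ) = i / n + 1 := by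
    intro i
    have := Int.add_mul_ediv_right i 1 (ne_of_gt hn')
    rwa [one_mul] at this
  have hperiod : ∀ i : ℤ, Θ (i + n) = Θ i + 2*π := by
    intro i
    rw [hΘdef]
    simp only
    rw [hdiv i]
    have hidxp : idx (i + n) = idx i := by
      rw [hidxdef]
      simp only
      congr 1
      rw [hmod i]
    rw [hidxp]
    push_cast
    ring
  -- strict monotonicity
  have hEm : StrictMono E := (t.orderEmbOfFin ht).strictMono
  have hmono : StrictMono Θ := by
    apply strictMono_int_of_lt_succ
    intro i
    have hr0 := Int.emod_nonneg i (ne_of_gt hn')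
    have hrn := Int.emod_lt_of_pos i hn'
    have hiq := hdm i
    by_cases hcase : i % n + 1 < n
    · have heq : i + 1 = (i % n + 1) + (n:ℤ) * (i / n) := by omega
      have h1 : (i+1) % n = i % n + 1 := by
        rw [heq, Int.add_mul_emod_self_left, Int.emod_eq_of_lt (by omega) (by omega)]
      have h2 : (i+1) / n = i / n := by
        rw [heq, Int.add_mul_ediv_left _ _ (ne_of_gt hn'),
          Int.ediv_eq_zero_of_lt (by omega) (by omega), zero_add]
      have hlt : idx i < idx (i+1) := by
        rw [Fin.lt_def]
        show (i % (n:ℤ)).toNat < ((i+1) % (n:ℤ)).toNat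
        rw [h1]
        omega
      have hE := hEm hlt
      rw [hΘdef]
      simp only
      rw [h2]
      linarith [hE]
    · have hr : i % n = n - 1 := by omega
      have heq : i + 1 = (n:ℤ) * (i / n + 1) := by
        have hd : (n:ℤ) * (i / n + 1) = n * (i / n) + n := by ring
        omega
      have h1 : (i+1) % n = 0 := by rw [heq]; exact Int.mul_emod_right _ _
      have h2 : (i+1) / n = i / n + 1 := by
        rw [heq, Int.mul_ediv_cancel_left _ (ne_of_gt hn')]
      rw [hΘdef]
      simp only
      rw [h2]
      have h5 := hE2π (idx i)
      have h6 := hE0 (idx (i+1))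
      push_cast
      linarith [h5, h6]
  -- membership
  have hmem : ∀ i : ℤ, ((Θ i : ℝ) : S¹) ∈ s := fun i => (hΘcoe i) ▸ hEproj (idx i)
  -- coe equality iff mod equality
  have hiff : ∀ i j : ℤ, (((Θ i : ℝ) : S¹) = ((Θ j : ℝ) : S¹)) ↔ i % (n:ℤ) = j % (n:ℤ) := by
    intro i j
    rw [hΘcoe i, hΘcoe j]
    constructor
    · intro h
      have hmi : (E (idx i) : ℝ) ∈ Set.Ico (0:ℝ) (0 + 2*π) := by
        rw [zero_add]; exact ⟨hE0 _, hE2π _⟩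
      have hmj : (E (idx j) : ℝ) ∈ Set.Ico (0:ℝ) (0 + 2*π) := by
        rw [zero_add]; exact ⟨hE0 _, hE2π _⟩
      have h2 : (E (idx i) : ℝ) = E (idx j) :=
        (AddCircle.coe_eq_coe_iff_of_mem_Ico hmi hmj).mp h
      have h3 : idx i = idx j := E.injective h2
      have h4 : (i % (n:ℤ)).toNat = (j % (n:ℤ)).toNat := congrArg Fin.val h3
      have h5 := Int.emod_nonneg i (ne_of_gt hn')
      have h6 := Int.emod_nonneg j (ne_of_gt hn')
      omega
    · intro h
      have h3 : idx i = idx j := by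
        rw [hidxdef]; simp only; congr 1; rw [h]
      rw [h3]
  -- surjectivity
  have hsurj : ∀ x, x ∈ s → ∃ i : ℤ, 0 ≤ i ∧ i < (n:ℤ) ∧ ((Θ i : ℝ) : S¹) = x := by
    intro x hx
    have h1 : rep x ∈ t := Finset.mem_image_of_mem rep hx
    have h2 : rep x ∈ Set.range E := by
      rw [hEdef, Finset.range_orderEmbOfFin]
      exact h1
    obtain ⟨fi, hfi⟩ := h2
    refine ⟨(fi : ℕ), by positivity, by exact_mod_cast fi.2, ?_⟩
    have hmodf : ((fi : ℕ) : ℤ) % (n:ℤ) = (fi : ℕ) := by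
      apply Int.emod_eq_of_lt (by positivity)
      exact_mod_cast fi.2
    have hdivf : ((fi : ℕ) : ℤ) / (n:ℤ) = 0 := by
      apply Int.ediv_eq_zero_of_lt (by positivity)
      exact_mod_cast fi.2
    have hidxf : idx ((fi : ℕ) : ℤ) = fi := by
      rw [hidxdef]
      apply Fin.ext
      simp only
      rw [hmodf]
      simp
    rw [hΘcoe, hidxf, hfi, hrep_proj]
  exact ⟨Θ, hmono, hperiod, hmem, hiff, hsurj⟩
end lift

section part2
open Real

local notation "S¹" => AddCircle (2 * π)

set_option maxHeartbeats 1000000 in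
lemma part2 (k : ℕ) (hk : 2 ≤ k) (s : Finset S¹) (hcard : s.card = 2 * k + 2)
    (hlt : tbX ↥s < tdX ↥s) :
    (k : ℝ) * π / (k + 1) ≤ tbX ↥s ∧ tdX ↥s ≤ π := by
  have hpi := pi_pos
  set n : ℕ := 2*k+2 with hndef
  have hn : 0 < n := by omega
  have hn' : (0:ℤ) < (n:ℤ)  := by exact_mod_cast hn
  have hnne : ((n:ℤ)) ≠ 0 := ne_of_gt hn'
  have hsne : s.Nonempty := Finset.card_pos.mp (by omega)
  obtain ⟨x₀, hx₀⟩ := hsne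
  haveI : Nonempty ↥s := ⟨⟨x₀, hx₀⟩⟩
  have htd_pi : tdX ↥s ≤ π := by
    refine (tdX_le_ptTd (⟨x₀, hx₀⟩ : ↥s)).trans (ptTd_le _ ?_)
    intro y
    rw [Subtype.dist_eq]
    exact circle_dist_le_pi _ _
  refine ⟨?_, htd_pi⟩
  set b := tbX ↥s with hbdef
  set d := tdX ↥s with hddef
  have hbd : b < d := hlt
  have hbπ : b < π := lt_of_lt_of_le hbd htd_pi
  have h2elt : ∃ y z : ↥s, y ≠ z := by
    have h1 : 1 < s.card := by omega
    obtain ⟨a, ha, c, hc, hac⟩ := Finset.one_lt_card.mp h1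
    exact ⟨⟨a, ha⟩, ⟨c, hc⟩, fun h => hac (congrArg Subtype.val h)⟩
  have hb0 : 0 ≤ b := by
    obtain ⟨y, z, hyz⟩ := h2elt
    calc (0:ℝ) ≤ min (dist y y) (dist y z) := le_min dist_nonneg dist_nonneg
    _ ≤ ptTb ↥s y := le_ptTb y hyz
    _ ≤ b := ptTb_le_tbX y
  have hmin : ∀ (x y z : ↥s), y ≠ z → min (dist x y) (dist x z) ≤ b :=
    fun x _ _ h => (le_ptTb x h).trans (ptTb_le_tbX x)
  -- the partner map
  have hpt : ∀ x : ↥s, ∃ y : ↥s, d ≤ dist x y ∧ ∀ z : ↥s, z ≠ y → dist x z ≤ b := by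
    intro x
    obtain ⟨y, hy⟩ := exists_ptTd x
    have h2 : d ≤ dist x y := by rw [hy]; exact tdX_le_ptTd x
    refine ⟨y, h2, ?_⟩
    intro z hz
    by_contra hcon
    push_neg at hcon
    have h3 : b < min (dist x z) (dist x y) := lt_min hcon (lt_of_lt_of_le hbd h2)
    linarith [hmin x z y hz]
  choose pt hptd hptb using hpt
  have hptne : ∀ x : ↥s, pt x ≠ x := by
    intro x h
    have h1 := hptd x
    rw [h, dist_self] at h1
    linarith
  have hptinv : ∀ x : ↥s, pt (pt x) = x := by
    intro x
    by_contra hcon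
    have h1 := hptb (pt x) x (Ne.symm hcon)
    rw [dist_comm] at h1
    linarith [hptd x]
  -- integer arithmetic helpers
  have hmodn : ∀ a : ℤ, (a + n) % (n:ℤ) = a % n := by
    intro a
    have h := Int.add_mul_emod_self_left (a := a) (b := (n:ℤ)) (c := 1)
    rwa [mul_one] at h
  have hsmall : ∀ a : ℤ, -(n:ℤ) < a → a < n → a % (n:ℤ) = 0 → a = 0 := by
    intro a h1 h2 h3
    rcases le_or_gt 0 a with h|h
    · rw [Int.emod_eq_of_lt h h2] at h3; exact h3
    · exfalso
      have h4 : (a + n) % (n:ℤ) = a % n := hmodn a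
      rw [Int.emod_eq_of_lt (by omega) (by omega)] at h4
      omega
  have hcong_eq : ∀ a c : ℤ, a % (n:ℤ) = c % n → -(n:ℤ) < a - c → a - c < n → a = c := by
    intro a c h h1 h2
    have h3 : (a - c) % (n:ℤ) = 0 := by
      rw [Int.sub_emod, h, sub_self, Int.zero_emod]
    have := hsmall (a-c) h1 h2 h3
    omega
  -- the lift
  obtain ⟨Θ, hmono, hperiod, hmem, hiff, hsurj⟩ := exists_lift n hn s (by rw [hcard])
  set P : ℤ → S¹ := fun i => ((Θ i : ℝ) : S¹) with hPdef
  have hPcong : ∀ i j : ℤ, i % (n:ℤ) = j % n → P i = P j := fun i j h => (hiff i j).mpr h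
  have hPmod : ∀ i j : ℤ, P i = P j → i % (n:ℤ) = j % n := fun i j h => (hiff i j).mp h
  have hPperiod : ∀ i : ℤ, P (i + n) = P i := fun i => hPcong _ _ (hmodn i)
  -- the partner index map
  have hIpt : ∀ i : ℤ, ∃ jj : ℤ, 0 ≤ jj ∧ jj < (n:ℤ) ∧ P jj = (pt ⟨P i, hmem i⟩).val := by
    intro i; exact hsurj _ (pt ⟨P i, hmem i⟩).2
  choose I0 hI0a hI0b hI0c using hIpt
  set pf : ℤ → ℤ := fun i => i + (I0 i - i) % n with hpfdef
  have hpf_val : ∀ i : ℤ, P (pf i) = (pt ⟨P i, hmem i⟩).val := by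
    intro i
    have h1 : pf i % (n:ℤ) = I0 i % n := by
      show (i + (I0 i - i) % n) % (n:ℤ) = I0 i % n
      calc (i + (I0 i - i) % n) % (n:ℤ)
          = (i % n + ((I0 i - i) % n) % n) % n := Int.add_emod _ _ _
        _ = (i % n + (I0 i - i) % n) % n := by rw [Int.emod_emod_of_dvd _ dvd_rfl]
        _ = (i + (I0 i - i)) % n := (Int.add_emod _ _ _).symm
        _ = I0 i % n := by congr 1; ring
    rw [← hI0c i]
    exact hPcong _ _ h1
  have hpf_rng : ∀ i : ℤ, i < pf i ∧ pf i < i + n := by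
    intro i
    have h1 : 0 ≤ (I0 i - i) % (n:ℤ) := Int.emod_nonneg _ hnne
    have h2 : (I0 i - i) % (n:ℤ) < n := Int.emod_lt_of_pos _ hn'
    have h3 : (I0 i - i) % (n:ℤ) ≠ 0 := by
      intro h0
      have h4 : pf i % (n:ℤ) = i % n := by
        show (i + (I0 i - i) % n) % (n:ℤ) = i % n
        rw [h0, add_zero]
      have h5 : P (pf i) = P i := hPcong _ _ h4
      rw [hpf_val i] at h5
      exact hptne ⟨P i, hmem i⟩ (Subtype.ext h5)
    constructor <;> (show _ ; simp only [hpfdef]; omega)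
  have hpf_dist : ∀ i : ℤ, d ≤ dist (P i) (P (pf i)) := by
    intro i
    have h1 := hptd ⟨P i, hmem i⟩
    rw [Subtype.dist_eq] at h1
    rwa [← hpf_val i] at h1
  have hpf_nb : ∀ i j : ℤ, i < j → j < i + n → j ≠ pf i → dist (P i) (P j) ≤ b := by
    intro i j h1 h2 h3
    have h4 : (⟨P j, hmem j⟩ : ↥s) ≠ pt ⟨P i, hmem i⟩ := by
      intro hcon
      have h5 : P j = P (pf i) := by
        rw [hpf_val i]; exact congrArg Subtype.val hcon
      have h6 := hPmod _ _ h5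
      have h7 := hpf_rng i
      exact h3 (hcong_eq j (pf i) h6 (by omega) (by omega))
    have h8 := hptb ⟨P i, hmem i⟩ ⟨P j, hmem j⟩ h4
    rwa [Subtype.dist_eq] at h8
  have hpf_per : ∀ i : ℤ, pf (i + n) = pf i + n := by
    intro i
    have h1 : (⟨P (i+n), hmem _⟩ : ↥s) = ⟨P i, hmem i⟩ := Subtype.ext (hPperiod i)
    have h2 : P (pf (i+n)) = P (pf i) := by rw [hpf_val, hpf_val, h1]
    have h3 := hPmod _ _ h2
    have h4 := hpf_rng (i+n)
    have h5 := hpf_rng i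
    have h6 : pf (i+n) % (n:ℤ) = (pf i + n) % n := by rw [hmodn]; exact h3
    exact hcong_eq _ _ h6 (by omega) (by omega)
  have hpf_inv : ∀ i : ℤ, pf (pf i) = i + n := by
    intro i
    have hx : (⟨P (pf i), hmem _⟩ : ↥s) = pt ⟨P i, hmem i⟩ := Subtype.ext (hpf_val i)
    have h2 : P (pf (pf i)) = P i := by
      rw [hpf_val (pf i), hx, hptinv]
    have h3 := hPmod _ _ h2
    have h4 := hpf_rng (pf i)
    have h5 := hpf_rng i
    have h6 : pf (pf i) % (n:ℤ) = (i + n) % n := by rw [hmodn]; exact h3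
    exact hcong_eq _ _ h6 (by omega) (by omega)
  have hpf_inj : ∀ i j : ℤ, pf i = pf j → i = j := by
    intro i j h
    have h1 := congrArg pf h
    rw [hpf_inv, hpf_inv] at h1
    omega
  -- distance formula
  have hdistm : ∀ i j : ℤ, i ≤ j → j ≤ i + n →
      dist (P i) (P j) = min (Θ j - Θ i) (2*π - (Θ j - Θ i)) := by
    intro i j h1 h2
    have h3 : Θ i ≤ Θ j := hmono.monotone h1
    have h4 : Θ j ≤ Θ i + 2*π := by
      have := hmono.monotone h2
      rw [hperiod i] at this
      linarith
    show dist ((Θ i : ℝ) : S¹) ((Θ j : ℝ) : S¹) = _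
    exact circle_dist_min _ _ (by linarith) (by linarith)
  -- the non-crossing contradiction
  have hNC : ∀ i j j' : ℤ, i < j → j < j' → j' < pf i → pf j = j' → False := by
    intro i j j' h1 h2 h3 h4
    have hri := hpf_rng i
    have hA := hpf_dist i
    rw [hdistm i (pf i) hri.1.le hri.2.le] at hA
    have hA1 : d ≤ Θ (pf i) - Θ i := le_trans hA (min_le_left _ _)
    have hA2 : d ≤ 2*π - (Θ (pf i) - Θ i) := le_trans hA (min_le_right _ _)
    have hz1 : dist (P i) (P j) ≤ b := hpf_nb i j h1 (by omega) (by omega)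
    rw [hdistm i j h1.le (by omega)] at hz1
    have hmj : Θ j < Θ (pf i) := hmono (by omega)
    have hz1' : Θ j - Θ i ≤ b := by
      rcases min_le_iff.mp hz1 with h|h
      · exact h
      · linarith
    have hz2 : dist (P j) (P (pf i)) ≤ b := hpf_nb j (pf i) (by omega) (by omega) (by omega)
    rw [hdistm j (pf i) (by omega) (by omega)] at hz2
    have hmi : Θ i < Θ j := hmono h1
    have hz2' : Θ (pf i) - Θ j ≤ b := by
      rcases min_le_iff.mp hz2 with h|h
      · exact h
      · linarith
    have hz3 : d ≤ dist (P j) (P j') := by rw [← h4]; exact hpf_dist j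
    rw [hdistm j j' h2.le (by omega)] at hz3
    have h7 : d ≤ Θ j' - Θ j := le_trans hz3 (min_le_left _ _)
    have h8 : Θ j' < Θ (pf i) := hmono h3
    linarith
  -- every chord has exactly k points on each side
  have hphi : ∀ i r : ℤ, i < r → r < pf i → pf i < pf r ∧ pf r < i + n := by
    intro i r h1 h2
    have hrr := hpf_rng r
    have hri := hpf_rng i
    have hne1 : pf r ≠ pf i := fun h => by have := hpf_inj r i h; omega
    have hgt : pf i < pf r := by
      rcases lt_trichotomy (pf r) (pf i) with h|h|h
      · exact absurd (hNC i r (pf r) h1 hrr.1 h rfl) not_false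
      · exact absurd h hne1
      · exact h
    have hne2 : pf r ≠ i + n := by
      intro h
      have h5 := congrArg pf h
      rw [hpf_inv r, hpf_per i] at h5
      omega
    have hlt : pf r < i + n := by
      rcases lt_trichotomy (pf r) (i+n) with h|h|h
      · exact h
      · exact absurd h hne2
      · exfalso
        have h9 : r + n < pf (i+n) := by rw [hpf_per i]; omega
        exact hNC (i+n) (pf r) (r + n) h (by omega) h9 (hpf_inv r)
    exact ⟨hgt, hlt⟩
  have hstep : ∀ i : ℤ, pf i = i + ((k:ℤ)+1) := by
    intro i
    have hri := hpf_rng i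
    have hmap1 : ∀ r ∈ Finset.Ioo i (pf i), pf r ∈ Finset.Ioo (pf i) (i + n) := by
      intro r hr
      rw [Finset.mem_Ioo] at hr ⊢
      exact hphi i r hr.1 hr.2
    have hmap2 : ∀ r ∈ Finset.Ioo (pf i) (i + n), pf r ∈ Finset.Ioo (i + n) (pf i + n) := by
      intro r hr
      rw [Finset.mem_Ioo] at hr ⊢
      have h1 := hphi (pf i) r hr.1 (by rw [hpf_inv i]; exact hr.2)
      rwa [hpf_inv i] at h1
    have hc1 : (Finset.Ioo i (pf i)).card ≤ (Finset.Ioo (pf i) (i+n)).card :=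
      Finset.card_le_card_of_injOn pf hmap1 (fun r1 _ r2 _ h => hpf_inj _ _ h)
    have hc2 : (Finset.Ioo (pf i) (i+n)).card ≤ (Finset.Ioo (i+n) (pf i + n)).card :=
      Finset.card_le_card_of_injOn pf hmap2 (fun r1 _ r2 _ h => hpf_inj _ _ h)
    rw [Int.card_Ioo, Int.card_Ioo] at hc1 hc2
    omega
  -- k-step arcs are short
  have hfar : ∀ i : ℤ, Θ (i + k) - Θ i ≤ b := by
    intro i
    have h1 : dist (P i) (P (i + k)) ≤ b := by
      refine hpf_nb i (i+k) (by omega) (by omega) ?_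
      rw [hstep i]; omega
    rw [hdistm i (i+k) (by omega) (by omega)] at h1
    rcases min_le_iff.mp h1 with h|h
    · exact h
    · exfalso
      have h3 := hpf_dist i
      rw [hstep i, hdistm i (i + ((k:ℤ)+1)) (by omega) (by omega)] at h3
      have h4 : d ≤ 2*π - (Θ (i + ((k:ℤ)+1)) - Θ i) := le_trans h3 (min_le_right _ _)
      have h5 : Θ (i + (k:ℤ)) < Θ (i + ((k:ℤ)+1)) := hmono (by omega)
      linarith
  -- summing the k-step arcs
  have hsum : ∀ m : ℕ, (Finset.range n).sum (fun i => Θ ((i:ℤ) + m) - Θ (i:ℤ)) = 2*π*m := by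
    intro m
    induction m with
    | zero => simp
    | succ m ih =>
      have hsplit : ∀ i ∈ Finset.range n, Θ ((i:ℤ) + ((m:ℕ)+1:ℕ)) - Θ (i:ℤ)
          = (Θ ((i:ℤ) + m + 1) - Θ ((i:ℤ) + m)) + (Θ ((i:ℤ) + m) - Θ (i:ℤ)) := by
        intro i _
        have harg : ((i:ℤ) + ((m:ℕ)+1:ℕ) : ℤ) = (i:ℤ) + m + 1 := by push_cast; ring
        rw [harg]
        ring
      rw [Finset.sum_congr rfl hsplit, Finset.sum_add_distrib, ih]
      have htel : (Finset.range n).sum (fun i => Θ ((i:ℤ) + m + 1) - Θ ((i:ℤ) + m)) = 2*π := by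
        have h1 := Finset.sum_range_sub (f := fun i : ℕ => Θ ((i:ℤ) + m)) n
        have h2 : ∀ i ∈ Finset.range n, Θ ((i:ℤ) + m + 1) - Θ ((i:ℤ) + m)
            = Θ (((i+1:ℕ):ℤ) + m) - Θ ((i:ℤ) + m) := by
          intro i _
          have : (((i+1:ℕ):ℤ) + m) = (i:ℤ) + m + 1 := by push_cast; ring
          rw [this]
        rw [Finset.sum_congr rfl h2, h1]
        have h3 : ((n:ℤ) + m) = ((m:ℤ) + n) := by ring
        have h4 : ((0:ℕ):ℤ) + m = (m:ℤ) := by push_cast; ring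
        rw [h3, h4, hperiod]
        ring
      rw [htel]
      push_cast
      ring
  have hsumk := hsum k
  have hle : (Finset.range n).sum (fun i => Θ ((i:ℤ) + k) - Θ (i:ℤ)) ≤ (n:ℝ) * b := by
    calc (Finset.range n).sum (fun i => Θ ((i:ℤ) + k) - Θ (i:ℤ))
        ≤ (Finset.range n).sum (fun _ => b) := Finset.sum_le_sum (fun i _ => hfar i)
      _ = (n:ℝ) * b := by rw [Finset.sum_const, Finset.card_range, nsmul_eq_mul]
  have hkpos : (0:ℝ) < (k:ℝ)+1 := by positivity
  rw [div_le_iff₀ hkpos]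
  have hn_cast : ((n:ℕ):ℝ) = 2*(k:ℝ)+2 := by rw [hndef]; push_cast; ring
  rw [hsumk] at hle
  rw [hn_cast] at hle
  linarith
end part2


/-- Characterization of the principal persistence set of the circle for even `k`:
the pairs `(t_b(X), t_d(X))` realized by `(2k+2)`-point subsets `X ⊆ S¹` with
`t_b(X) < t_d(X)` are exactly the pairs with `kπ/(k+1) ≤ t_b < t_d ≤ π`. -/
theorem circle_tb_td_characterization_even (k : ℕ) (hk : 2 ≤ k) (hke : Even k) :
    (∀ b d : ℝ, (k : ℝ) * Real.pi / (k + 1) ≤ b → b < d → d ≤ Real.pi →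
      ∃ s : Finset (AddCircle (2 * Real.pi)),
        s.card = 2 * k + 2 ∧ tbX ↥s = b ∧ tdX ↥s = d) ∧
    (∀ s : Finset (AddCircle (2 * Real.pi)), s.card = 2 * k + 2 →
      tbX ↥s < tdX ↥s →
        (k : ℝ) * Real.pi / (k + 1) ≤ tbX ↥s ∧ tdX ↥s ≤ Real.pi) := by
  constructor
  · intro b d hb hbd hd
    exact part1 k hk hke b d hb hbd hd
  · intro s hcard hlt
    exact part2 k hk s hcard hlt
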